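/- arXiv:1407.7916 — 2 statements merged into one kernel-verified Lean document; each statement's English description precedes it below -/
import Mathlib

section
/- Let ν be a partition, fix an addable corner of ν at position (α,β) (row α, column β), so its weight is A = t^α·q^β, and let μ = ν together with that cell. Then in ℚ(q,t): ∏_{s∈R_{μν}} (q^{a_ν(s)}−t^{l_ν(s)+1})/(q^{a_μ(s)}−t^{l_μ(s)+1}) = q^{−β} · ∏_{R}(A − qt·R) / ∏_{A'}(A − A'), where the numerator product runs over the weights R of the removable corners of ν whose column index is strictly less than β, the denominator product runs over the weights A' of the addable corners of ν whose column index is strictly less than β, and these two sets of corners have equal cardinality. -/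
open scoped Classical
open PowerSeries

noncomputable section

abbrev K := FractionRing (MvPolynomial (Fin 2) ℚ)

def q : K := algebraMap (MvPolynomial (Fin 2) ℚ) K (MvPolynomial.X 0)
def t : K := algebraMap (MvPolynomial (Fin 2) ℚ) K (MvPolynomial.X 1)

/-- the weight of a cell `(i,j)` (row `i`, column `j`) is `t^i * q^j` -/
def w (c : ℕ × ℕ) : K := t ^ c.1 * q ^ c.2

/-- `B_μ = Σ_{c ∈ μ} w(c)` -/
def Bsum (μ : YoungDiagram) : K := ∑ c ∈ μ.cells, w c

/-- a removable corner: a cell of `μ` whose removal leaves a Young diagram -/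
def IsRemovable (μ : YoungDiagram) (c : ℕ × ℕ) : Prop :=
  c ∈ μ ∧ IsLowerSet (↑(μ.cells.erase c) : Set (ℕ × ℕ))

/-- an addable corner: a cell not in `μ` whose addition gives a Young diagram -/
def IsAddable (μ : YoungDiagram) (c : ℕ × ℕ) : Prop :=
  c ∉ μ ∧ IsLowerSet (↑(insert c μ.cells) : Set (ℕ × ℕ))

/-- the arm of a cell: number of cells of `μ` strictly east of it in its row -/
def arm (μ : YoungDiagram) (c : ℕ × ℕ) : ℕ :=
  (μ.cells.filter fun d => d.1 = c.1 ∧ c.2 < d.2).card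

/-- the leg of a cell: number of cells of `μ` strictly north of it in its column -/
def leg (μ : YoungDiagram) (c : ℕ × ℕ) : ℕ :=
  (μ.cells.filter fun d => d.2 = c.2 ∧ c.1 < d.1).card


/-! ### auxiliary lemmas -/

lemma alg_inj : Function.Injective (algebraMap (MvPolynomial (Fin 2) ℚ) K) :=
  IsFractionRing.injective _ _

lemma q_ne_zero : q ≠ 0 := by
  simp only [q, Ne, map_eq_zero_iff _ alg_inj]
  exact MvPolynomial.X_ne_zero 0

lemma t_ne_zero : t ≠ 0 := by
  simp only [t, Ne, map_eq_zero_iff _ alg_inj]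
  exact MvPolynomial.X_ne_zero 1

lemma pow_eq_pow (a b : ℕ) (h : q ^ a = t ^ b) : a = 0 ∧ b = 0 := by
  rw [q, t, ← map_pow, ← map_pow] at h
  have h2 := alg_inj h
  rw [MvPolynomial.X_pow_eq_monomial, MvPolynomial.X_pow_eq_monomial,
    MvPolynomial.monomial_eq_monomial_iff] at h2
  rcases h2 with ⟨hs, -⟩ | ⟨h1, -⟩
  · constructor
    · have := DFunLike.congr_fun hs (0 : Fin 2); simpa using this
    · have := DFunLike.congr_fun hs (1 : Fin 2); simpa using this.symm
  · exact absurd h1 one_ne_zero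

lemma sub_ne (a b : ℕ) (hb : 0 < b) : q ^ a - t ^ b ≠ 0 := by
  intro h
  have := pow_eq_pow a b (sub_eq_zero.mp h)
  omega

lemma split_ite_prod (n : ℕ) (p : ℕ → Prop) [DecidablePred p] (f : ℕ → K) :
    (∏ k ∈ Finset.range n, if p k then q * f k else 1) =
      q ^ (∑ k ∈ Finset.range n, if p k then 1 else 0) *
        ∏ k ∈ Finset.range n, if p k then f k else 1 := by
  induction n with
  | zero => simp
  | succ n ih =>
    rw [Finset.prod_range_succ, Finset.prod_range_succ, Finset.sum_range_succ, ih]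
    split_ifs <;> ring

lemma key (α : ℕ) (β : ℕ) (L : ℕ → ℕ) (h1 : ∀ j, j < β → L (j+1) ≤ L j)
    (h2 : ∀ j, j < β → α < L j) (h3 : L β = α) :
    ((∑ j ∈ Finset.range β, if L (j+1) < L j then 1 else 0) =
      (∑ j ∈ Finset.range β, if j = 0 ∨ L j < L (j-1) then 1 else 0))
    ∧ (∏ j ∈ Finset.range β, (q^(β-1-j) - t^(L j - α))) *
        (q^β * ∏ j ∈ Finset.range β, (if j = 0 ∨ L j < L (j-1) then (q^β - q^j * t^(L j - α)) else 1))
      = (∏ j ∈ Finset.range β, (q^(β-j) - t^(L j - α))) *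
        ∏ j ∈ Finset.range β, (if L (j+1) < L j then (q^β - q^(j+1) * t^(L j - α)) else 1) := by
  induction β generalizing L with
  | zero => simp
  | succ β ih =>
    obtain ⟨ihc, ihp⟩ := ih (fun j => L (j+1)) (fun j hj => h1 (j+1) (by omega))
      (fun j hj => h2 (j+1) (by omega)) h3
    rcases Nat.eq_zero_or_pos β with rfl | hβ
    · have h3' : L 1 = α := h3
      have hc0 : L 1 < L 0 := by
        have := h2 0 (by omega); omega
      constructor
      · simp [Finset.filter_singleton, hc0]
      · simp [Finset.prod_range_succ, Finset.range_one, hc0]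
        ring
    · obtain ⟨γ, rfl⟩ : ∃ γ, β = γ + 1 := ⟨β - 1, by omega⟩
      simp only [Finset.prod_range_succ', Finset.sum_range_succ', Nat.add_sub_cancel,
        Nat.succ_ne_zero, false_or, Nat.sub_zero, pow_zero, one_mul, Nat.zero_add,
        eq_self_iff_true, true_or, if_true] at ihc ihp ⊢
      have hPA : (∏ k ∈ Finset.range γ, (q ^ (γ + 1 - (k + 1 + 1)) - t ^ (L (k + 1 + 1) - α)))
          = ∏ k ∈ Finset.range γ, (q ^ (γ - (k + 1)) - t ^ (L (k + 1 + 1) - α)) :=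
        Finset.prod_congr rfl fun k _ => by
          have h : γ + 1 - (k + 1 + 1) = γ - (k + 1) := by omega
          rw [h]
      have hPB : (∏ k ∈ Finset.range γ, (q ^ (γ + 1 + 1 - (k + 1 + 1)) - t ^ (L (k + 1 + 1) - α)))
          = ∏ k ∈ Finset.range γ, (q ^ (γ + 1 - (k + 1)) - t ^ (L (k + 1 + 1) - α)) :=
        Finset.prod_congr rfl fun k _ => by
          have h : γ + 1 + 1 - (k + 1 + 1) = γ + 1 - (k + 1) := by omega
          rw [h]
      have hE0 : (∏ k ∈ Finset.range γ, if L (k+1+1) < L (k+1) then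
            q * (q^(γ+1) - q^(k+1) * t^(L (k+1+1) - α)) else 1)
          = q ^ (∑ k ∈ Finset.range γ, if L (k+1+1) < L (k+1) then 1 else 0) *
            ∏ k ∈ Finset.range γ, if L (k+1+1) < L (k+1) then
              (q^(γ+1) - q^(k+1) * t^(L (k+1+1) - α)) else 1 := split_ite_prod γ _ _
      have hE : (∏ k ∈ Finset.range γ, if L (k+1+1) < L (k+1) then
            q^(γ+1+1) - q^(k+1+1) * t^(L (k+1+1) - α) else 1)
          = q ^ (∑ k ∈ Finset.range γ, if L (k+1+1) < L (k+1) then 1 else 0) *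
            ∏ k ∈ Finset.range γ, if L (k+1+1) < L (k+1) then
              (q^(γ+1) - q^(k+1) * t^(L (k+1+1) - α)) else 1 := by
        rw [← hE0]
        exact Finset.prod_congr rfl fun k _ => by split_ifs <;> ring
      have hN0 : (∏ k ∈ Finset.range γ, if L (k+1+1+1) < L (k+1+1) then
            q * (q^(γ+1) - q^(k+1+1) * t^(L (k+1+1) - α)) else 1)
          = q ^ (∑ k ∈ Finset.range γ, if L (k+1+1+1) < L (k+1+1) then 1 else 0) *
            ∏ k ∈ Finset.range γ, if L (k+1+1+1) < L (k+1+1) then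
              (q^(γ+1) - q^(k+1+1) * t^(L (k+1+1) - α)) else 1 := split_ite_prod γ _ _
      have hN : (∏ k ∈ Finset.range γ, if L (k+1+1+1) < L (k+1+1) then
            q^(γ+1+1) - q^(k+1+1+1) * t^(L (k+1+1) - α) else 1)
          = q ^ (∑ k ∈ Finset.range γ, if L (k+1+1+1) < L (k+1+1) then 1 else 0) *
            ∏ k ∈ Finset.range γ, if L (k+1+1+1) < L (k+1+1) then
              (q^(γ+1) - q^(k+1+1) * t^(L (k+1+1) - α)) else 1 := by
        rw [← hN0]
        exact Finset.prod_congr rfl fun k _ => by split_ifs <;> ring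
      rw [hPA, hPB, hE, hN]
      have hL10 : L 1 ≤ L 0 := h1 0 (by omega)
      have hL21 : L (1+1) ≤ L 1 := h1 1 (by omega)
      by_cases hc1 : L 1 < L 0 <;> by_cases hc2 : L (1+1) < L 1 <;>
        simp only [hc1, hc2, if_true, if_false, eq_self_iff_true, add_zero] at ihc ihp ⊢
      · refine ⟨by omega, ?_⟩
        have hS : (∑ k ∈ Finset.range γ, if L (k + 1 + 1 + 1) < L (k + 1 + 1) then 1 else 0)
            = (∑ k ∈ Finset.range γ, if L (k + 1 + 1) < L (k + 1) then 1 else 0) := by omega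
        rw [hS]
        linear_combination ((q ^ (γ + 1) - t ^ (L 0 - α)) * (q ^ (γ + 1 + 1) - t ^ (L 0 - α)) *
          q ^ (∑ k ∈ Finset.range γ, if L (k + 1 + 1) < L (k + 1) then 1 else 0) * q ^ 2) * ihp
      · refine ⟨by omega, ?_⟩
        have hS : (∑ k ∈ Finset.range γ, if L (k + 1 + 1 + 1) < L (k + 1 + 1) then 1 else 0)
            = (∑ k ∈ Finset.range γ, if L (k + 1 + 1) < L (k + 1) then 1 else 0) + 1 := by omega
        rw [hS]
        linear_combination ((q ^ (γ + 1) - t ^ (L 0 - α)) * (q ^ (γ + 1 + 1) - t ^ (L 0 - α)) *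
          q ^ (∑ k ∈ Finset.range γ, if L (k + 1 + 1) < L (k + 1) then 1 else 0) * q ^ 2) * ihp
      · have hL10' : L 1 = L 0 := by omega
        rw [hL10'] at ihp ⊢
        refine ⟨by omega, ?_⟩
        have hS : (∑ k ∈ Finset.range γ, if L (k + 1 + 1 + 1) < L (k + 1 + 1) then 1 else 0)
            = (∑ k ∈ Finset.range γ, if L (k + 1 + 1) < L (k + 1) then 1 else 0) := by omega
        rw [hS]
        linear_combination ((q ^ (γ + 1 + 1) - t ^ (L 0 - α)) *
          q ^ (∑ k ∈ Finset.range γ, if L (k + 1 + 1) < L (k + 1) then 1 else 0) * q) * ihp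
      · have hL10' : L 1 = L 0 := by omega
        rw [hL10'] at ihp ⊢
        refine ⟨by omega, ?_⟩
        have hS : (∑ k ∈ Finset.range γ, if L (k + 1 + 1 + 1) < L (k + 1 + 1) then 1 else 0)
            = (∑ k ∈ Finset.range γ, if L (k + 1 + 1) < L (k + 1) then 1 else 0) + 1 := by omega
        rw [hS]
        linear_combination ((q ^ (γ + 1 + 1) - t ^ (L 0 - α)) *
          q ^ (∑ k ∈ Finset.range γ, if L (k + 1 + 1) < L (k + 1) then 1 else 0) * q) * ihp

lemma mem_erase_coe (ν : YoungDiagram) (c d : ℕ × ℕ) :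
    c ∈ (↑(ν.cells.erase d) : Set (ℕ × ℕ)) ↔ c ∈ ν ∧ c ≠ d := by
  simp [YoungDiagram.mem_cells, and_comm]

lemma mem_insert_coe (ν : YoungDiagram) (c d : ℕ × ℕ) :
    c ∈ (↑(insert d ν.cells) : Set (ℕ × ℕ)) ↔ c = d ∨ c ∈ ν := by
  simp [YoungDiagram.mem_cells]

lemma ydLower (ν : YoungDiagram) {x y : ℕ × ℕ} (h : x ≤ y) (hy : y ∈ ν) : x ∈ ν := by
  have := ν.isLowerSet h (show y ∈ (↑ν.cells : Set (ℕ×ℕ)) by simpa using hy)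
  simpa using this

lemma rem_char (ν : YoungDiagram) (i j : ℕ) :
    IsRemovable ν (i, j) ↔ i + 1 = ν.colLen j ∧ ν.colLen (j + 1) ≤ i := by
  constructor
  · rintro ⟨hm, hl⟩
    have hij : i < ν.colLen j := YoungDiagram.mem_iff_lt_colLen.mp hm
    have h1 : (i + 1, j) ∉ ν := by
      intro h
      have h3 := hl (show ((i,j) : ℕ×ℕ) ≤ (i+1,j) by rw [Prod.mk_le_mk]; omega)
        ((mem_erase_coe ν _ _).mpr ⟨h, by intro hx; rw [Prod.mk.injEq] at hx; omega⟩)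
      rw [mem_erase_coe] at h3
      exact h3.2 rfl
    have h2 : (i, j + 1) ∉ ν := by
      intro h
      have h3 := hl (show ((i,j) : ℕ×ℕ) ≤ (i,j+1) by rw [Prod.mk_le_mk]; omega)
        ((mem_erase_coe ν _ _).mpr ⟨h, by intro hx; rw [Prod.mk.injEq] at hx; omega⟩)
      rw [mem_erase_coe] at h3
      exact h3.2 rfl
    rw [YoungDiagram.mem_iff_lt_colLen] at h1 h2
    omega
  · rintro ⟨h1, h2⟩
    have hm : (i, j) ∈ ν := YoungDiagram.mem_iff_lt_colLen.mpr (by omega)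
    refine ⟨hm, ?_⟩
    rintro ⟨c, d⟩ ⟨a, b⟩ hle hcd
    rw [mem_erase_coe] at hcd ⊢
    obtain ⟨hcdm, hne⟩ := hcd
    have hac : a ≤ c := hle.1
    have hbd : b ≤ d := hle.2
    refine ⟨ydLower ν hle hcdm, ?_⟩
    intro hab
    rw [Prod.mk.injEq] at hab
    obtain ⟨rfl, rfl⟩ := hab
    rcases Nat.lt_or_ge b d with hd | hd
    · have : (a, b + 1) ∈ ν := ydLower ν
        (show ((a, b+1) : ℕ×ℕ) ≤ (c, d) by rw [Prod.mk_le_mk]; omega) hcdm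
      rw [YoungDiagram.mem_iff_lt_colLen] at this; omega
    · have hdb : d = b := by omega
      have hca : a < c := by
        rcases Nat.lt_or_ge a c with h | h
        · exact h
        · exfalso; apply hne; rw [Prod.mk.injEq]; omega
      have : (a + 1, b) ∈ ν := ydLower ν
        (show ((a+1, b) : ℕ×ℕ) ≤ (c, d) by rw [Prod.mk_le_mk]; omega) hcdm
      rw [YoungDiagram.mem_iff_lt_colLen] at this; omega

lemma add_char (ν : YoungDiagram) (i j : ℕ) :
    IsAddable ν (i, j) ↔ ν.colLen j = i ∧ (j = 0 ∨ i < ν.colLen (j - 1)) := by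
  constructor
  · rintro ⟨hm, hl⟩
    have key : ∀ a b : ℕ, ((a,b) : ℕ×ℕ) ≤ (i,j) → ¬(a = i ∧ b = j) → (a,b) ∈ ν := by
      intro a b hle hne
      have h2 := hl hle ((mem_insert_coe ν _ _).mpr (Or.inl rfl))
      rw [mem_insert_coe] at h2
      rcases h2 with h | h
      · exfalso; rw [Prod.mk.injEq] at h; exact hne h
      · exact h
    have hcl : ν.colLen j ≤ i := by
      by_contra h
      exact hm (YoungDiagram.mem_iff_lt_colLen.mpr (by omega))
    have hge : i ≤ ν.colLen j := by
      rcases Nat.eq_zero_or_pos i with rfl | hi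
      · omega
      · have := key (i-1) j (by rw [Prod.mk_le_mk]; omega) (by omega)
        rw [YoungDiagram.mem_iff_lt_colLen] at this; omega
    refine ⟨by omega, ?_⟩
    rcases Nat.eq_zero_or_pos j with rfl | hj
    · left; rfl
    · right
      have := key i (j-1) (by rw [Prod.mk_le_mk]; omega) (by omega)
      rw [YoungDiagram.mem_iff_lt_colLen] at this; omega
  · rintro ⟨h1, h2⟩
    have hm : (i, j) ∉ ν := by rw [YoungDiagram.mem_iff_lt_colLen]; omega
    refine ⟨hm, ?_⟩
    rintro ⟨c, d⟩ ⟨a, b⟩ hle hcd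
    rw [mem_insert_coe] at hcd ⊢
    have hac : a ≤ c := hle.1
    have hbd : b ≤ d := hle.2
    rcases hcd with hcd | hcdm
    · rw [Prod.mk.injEq] at hcd
      obtain ⟨rfl, rfl⟩ := hcd
      by_cases hab : a = c ∧ b = d
      · left; rw [Prod.mk.injEq]; exact hab
      · right
        rcases Nat.lt_or_ge b d with hb | hb
        · have hj' : (c, d - 1) ∈ ν := by
            rw [YoungDiagram.mem_iff_lt_colLen]
            rcases h2 with h | h
            · omega
            · exact h
          exact ydLower ν
            (show ((a,b) : ℕ×ℕ) ≤ (c, d-1) by rw [Prod.mk_le_mk]; omega) hj'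
        · have ha : a < c := by
            rcases Nat.lt_or_ge a c with h | h
            · exact h
            · exfalso; exact hab ⟨by omega, by omega⟩
          have hj' : (c - 1, d) ∈ ν := by
            rw [YoungDiagram.mem_iff_lt_colLen]; omega
          exact ydLower ν
            (show ((a,b) : ℕ×ℕ) ≤ (c-1, d) by rw [Prod.mk_le_mk]; omega) hj'
    · right; exact ydLower ν hle hcdm

lemma arm_nu (ν : YoungDiagram) {α β : ℕ} (hrow : ∀ j', (α, j') ∈ ν ↔ j' < β)
    {j : ℕ} (hj : j < β) : arm ν (α, j) = β - 1 - j := by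
  have hset : (ν.cells.filter fun d => d.1 = α ∧ j < d.2)
      = (Finset.Ioo j β).image (fun x => (α, x)) := by
    ext ⟨i, j'⟩
    simp only [Finset.mem_filter, YoungDiagram.mem_cells, Finset.mem_image, Finset.mem_Ioo,
      Prod.mk.injEq]
    constructor
    · rintro ⟨hm, h1, h2⟩
      exact ⟨j', ⟨h2, (hrow j').mp (by rwa [h1] at hm)⟩, h1.symm, rfl⟩
    · rintro ⟨x, ⟨hx1, hx2⟩, rfl, rfl⟩
      exact ⟨(hrow x).mpr hx2, rfl, hx1⟩
  have : arm ν (α, j) = ((Finset.Ioo j β).image (fun x => (α, x))).card := by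
    rw [arm, ← hset]
  rw [this, Finset.card_image_of_injective _
    (fun a b h => by simpa using congrArg Prod.snd h), Nat.card_Ioo]
  omega

lemma leg_nu (ν : YoungDiagram) (α j : ℕ) : leg ν (α, j) = ν.colLen j - α - 1 := by
  have hset : (ν.cells.filter fun d => d.2 = j ∧ α < d.1)
      = (Finset.Ioo α (ν.colLen j)).image (fun x => (x, j)) := by
    ext ⟨i, j'⟩
    simp only [Finset.mem_filter, YoungDiagram.mem_cells, Finset.mem_image, Finset.mem_Ioo,
      Prod.mk.injEq]
    constructor
    · rintro ⟨hm, h1, h2⟩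
      exact ⟨i, ⟨h2, YoungDiagram.mem_iff_lt_colLen.mp (by rwa [h1] at hm)⟩, rfl, h1.symm⟩
    · rintro ⟨x, ⟨hx1, hx2⟩, rfl, rfl⟩
      exact ⟨YoungDiagram.mem_iff_lt_colLen.mpr hx2, rfl, hx1⟩
  have : leg ν (α, j) = ((Finset.Ioo α (ν.colLen j)).image (fun x => (x, j))).card := by
    rw [leg, ← hset]
  rw [this, Finset.card_image_of_injective _
    (fun a b h => by simpa using congrArg Prod.fst h), Nat.card_Ioo]


/-- the row-product part of the Pieri coefficient `d_{μν}` in terms of the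
corners of `ν` with column index strictly less than that of the added cell. -/
theorem stmt_3 (ν : YoungDiagram) (Rem Add : Finset (ℕ × ℕ))
    (hRem : ∀ x, x ∈ Rem ↔ IsRemovable ν x)
    (hAdd : ∀ x, x ∈ Add ↔ IsAddable ν x)
    (α β : ℕ) (hc : IsAddable ν (α, β))
    (μ : YoungDiagram) (hμ : μ.cells = insert (α, β) ν.cells) :
    (Rem.filter fun r => r.2 < β).card = (Add.filter fun a => a.2 < β).card ∧
    (∏ s ∈ ν.cells.filter (fun s => s.1 = α),
        (q ^ arm ν s - t ^ (leg ν s + 1)) / (q ^ arm μ s - t ^ (leg μ s + 1))) =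
      (q ^ β)⁻¹ *
        (∏ r ∈ Rem.filter (fun r => r.2 < β), (w (α, β) - q * t * w r)) /
        (∏ a ∈ Add.filter (fun a => a.2 < β), (w (α, β) - w a)) := by
  obtain ⟨hnm, hls⟩ := hc
  have hrow : ∀ j, (α, j) ∈ ν ↔ j < β := by
    intro j
    constructor
    · intro h
      by_contra hb
      exact hnm (ydLower ν (show ((α,β):ℕ×ℕ) ≤ (α,j) by rw [Prod.mk_le_mk]; omega) h)
    · intro h
      have h2 := hls (show ((α,j):ℕ×ℕ) ≤ (α,β) by rw [Prod.mk_le_mk]; omega)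
        ((mem_insert_coe ν _ _).mpr (Or.inl rfl))
      rw [mem_insert_coe] at h2
      rcases h2 with h2 | h2
      · exfalso; rw [Prod.mk.injEq] at h2; omega
      · exact h2
  have hβcol : ν.colLen β = α := ((add_char ν α β).mp ⟨hnm, hls⟩).1
  have hgt : ∀ j, j < β → α < ν.colLen j := fun j hj =>
    YoungDiagram.mem_iff_lt_colLen.mp ((hrow j).mpr hj)
  have hmono : ∀ j, j < β → ν.colLen (j+1) ≤ ν.colLen j := fun j _ =>
    ν.colLen_anti j (j+1) (by omega)
  obtain ⟨kcard, keyeq⟩ := key α β ν.colLen hmono hgt hβcol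
  have hRemSet : Rem.filter (fun r => r.2 < β)
      = ((Finset.range β).filter (fun j => ν.colLen (j+1) < ν.colLen j)).image
          (fun j => (ν.colLen j - 1, j)) := by
    ext ⟨i, j⟩
    simp only [Finset.mem_filter, Finset.mem_image, Finset.mem_range, hRem, rem_char]
    constructor
    · rintro ⟨⟨h1, h2⟩, h3⟩
      exact ⟨j, ⟨h3, by omega⟩, by rw [Prod.mk.injEq]; omega⟩
    · rintro ⟨x, ⟨hx, hlt⟩, heq⟩
      rw [Prod.mk.injEq] at heq
      obtain ⟨h4, rfl⟩ := heq
      exact ⟨⟨by omega, by omega⟩, hx⟩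
  have hAddSet : Add.filter (fun a => a.2 < β)
      = ((Finset.range β).filter (fun j => j = 0 ∨ ν.colLen j < ν.colLen (j-1))).image
          (fun j => (ν.colLen j, j)) := by
    ext ⟨i, j⟩
    simp only [Finset.mem_filter, Finset.mem_image, Finset.mem_range, hAdd, add_char]
    constructor
    · rintro ⟨⟨h1, h2⟩, h3⟩
      exact ⟨j, ⟨h3, by omega⟩, by rw [Prod.mk.injEq]; omega⟩
    · rintro ⟨x, ⟨hx, hcond⟩, heq⟩
      rw [Prod.mk.injEq] at heq
      obtain ⟨h4, rfl⟩ := heq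
      exact ⟨⟨by omega, by omega⟩, hx⟩
  have hinj1 : Function.Injective (fun j : ℕ => ((ν.colLen j - 1, j) : ℕ × ℕ)) := by
    intro a b h; simpa using congrArg Prod.snd h
  have hinj2 : Function.Injective (fun j : ℕ => ((ν.colLen j, j) : ℕ × ℕ)) := by
    intro a b h; simpa using congrArg Prod.snd h
  have hcard : (Rem.filter fun r => r.2 < β).card = (Add.filter fun a => a.2 < β).card := by
    rw [hRemSet, hAddSet, Finset.card_image_of_injective _ hinj1,
      Finset.card_image_of_injective _ hinj2, Finset.card_filter, Finset.card_filter]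
    exact kcard
  refine ⟨hcard, ?_⟩
  have hLset : ν.cells.filter (fun s => s.1 = α) = (Finset.range β).image (fun j => (α, j)) := by
    ext ⟨i, j⟩
    simp only [Finset.mem_filter, Finset.mem_image, Finset.mem_range, YoungDiagram.mem_cells,
      Prod.mk.injEq]
    constructor
    · rintro ⟨hm, h1⟩
      exact ⟨j, (hrow j).mp (by rwa [h1] at hm), h1.symm, rfl⟩
    · rintro ⟨x, hx, rfl, rfl⟩
      exact ⟨(hrow x).mpr hx, rfl⟩
  have harm_mu : ∀ j, j < β → arm μ (α, j) = β - j := by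
    intro j hj
    have h1 : arm μ (α, j) = arm ν (α, j) + 1 := by
      simp only [arm, hμ, Finset.filter_insert]
      rw [if_pos ⟨trivial, hj⟩, Finset.card_insert_of_notMem]
      intro hmem
      rw [Finset.mem_filter] at hmem
      exact hnm ((YoungDiagram.mem_cells _).mp hmem.1)
    rw [h1, arm_nu ν hrow hj]; omega
  have hleg_mu : ∀ j, j < β → leg μ (α, j) = leg ν (α, j) := by
    intro j hj
    simp only [leg, hμ, Finset.filter_insert]
    rw [if_neg]
    rintro ⟨h1, -⟩
    have : β = j := h1
    omega
  have hprodL : (∏ s ∈ ν.cells.filter (fun s => s.1 = α),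
      (q ^ arm ν s - t ^ (leg ν s + 1)) / (q ^ arm μ s - t ^ (leg μ s + 1)))
      = (∏ j ∈ Finset.range β, (q^(β-1-j) - t^(ν.colLen j - α))) /
        (∏ j ∈ Finset.range β, (q^(β-j) - t^(ν.colLen j - α))) := by
    rw [hLset, Finset.prod_image (fun x _ y _ h => by simpa using congrArg Prod.snd h),
      ← Finset.prod_div_distrib]
    refine Finset.prod_congr rfl fun j hj => ?_
    rw [Finset.mem_range] at hj
    have he : ν.colLen j - α - 1 + 1 = ν.colLen j - α := by
      have := hgt j hj; omega
    rw [arm_nu ν hrow hj, harm_mu j hj, hleg_mu j hj, leg_nu, he]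
  have hfacR : ∀ j, j < β →
      w (α, β) - q * t * w (ν.colLen j - 1, j)
        = t^α * (q^β - q^(j+1) * t^(ν.colLen j - α)) := by
    intro j hj
    have hg := hgt j hj
    have h3 : t ^ (ν.colLen j - 1) * t = t ^ (ν.colLen j) := by
      rw [← pow_succ]; congr 1; omega
    have h4 : t ^ α * t ^ (ν.colLen j - α) = t ^ (ν.colLen j) := by
      rw [← pow_add]; congr 1; omega
    simp only [w]
    linear_combination q ^ (j+1) * h4 - q ^ (j+1) * h3
  have hfacA : ∀ j, j < β →
      w (α, β) - w (ν.colLen j, j) = t^α * (q^β - q^j * t^(ν.colLen j - α)) := by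
    intro j hj
    have hg := hgt j hj
    have h4 : t ^ α * t ^ (ν.colLen j - α) = t ^ (ν.colLen j) := by
      rw [← pow_add]; congr 1; omega
    simp only [w]
    linear_combination q ^ j * h4
  have hprodR : (∏ r ∈ Rem.filter (fun r => r.2 < β), (w (α, β) - q * t * w r))
      = (t^α) ^ ((Finset.range β).filter (fun j => ν.colLen (j+1) < ν.colLen j)).card *
        ∏ j ∈ (Finset.range β).filter (fun j => ν.colLen (j+1) < ν.colLen j),
          (q^β - q^(j+1) * t^(ν.colLen j - α)) := by
    rw [hRemSet, Finset.prod_image (fun x _ y _ h => hinj1 h)]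
    rw [Finset.prod_congr rfl (fun j hj => hfacR j (Finset.mem_range.mp (Finset.mem_filter.mp hj).1)),
      Finset.prod_mul_distrib, Finset.prod_const]
  have hprodA : (∏ a ∈ Add.filter (fun a => a.2 < β), (w (α, β) - w a))
      = (t^α) ^ ((Finset.range β).filter (fun j => j = 0 ∨ ν.colLen j < ν.colLen (j-1))).card *
        ∏ j ∈ (Finset.range β).filter (fun j => j = 0 ∨ ν.colLen j < ν.colLen (j-1)),
          (q^β - q^j * t^(ν.colLen j - α)) := by
    rw [hAddSet, Finset.prod_image (fun x _ y _ h => hinj2 h)]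
    rw [Finset.prod_congr rfl (fun j hj => hfacA j (Finset.mem_range.mp (Finset.mem_filter.mp hj).1)),
      Finset.prod_mul_distrib, Finset.prod_const]
  have hkk : ((Finset.range β).filter (fun j => j = 0 ∨ ν.colLen j < ν.colLen (j-1))).card
      = ((Finset.range β).filter (fun j => ν.colLen (j+1) < ν.colLen j)).card := by
    rw [Finset.card_filter, Finset.card_filter]
    exact kcard.symm
  rw [hprodL, hprodR, hprodA, hkk]
  rw [← Finset.prod_filter (fun j => ν.colLen (j+1) < ν.colLen j)
      (fun j => q^β - q^(j+1) * t^(ν.colLen j - α)),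
    ← Finset.prod_filter (fun j => j = 0 ∨ ν.colLen j < ν.colLen (j-1))
      (fun j => q^β - q^j * t^(ν.colLen j - α))] at keyeq
  have hLden : (∏ j ∈ Finset.range β, (q^(β-j) - t^(ν.colLen j - α))) ≠ 0 :=
    Finset.prod_ne_zero_iff.mpr fun j hj =>
      sub_ne _ _ (by have := hgt j (Finset.mem_range.mp hj); omega)
  have hDF : (∏ j ∈ (Finset.range β).filter (fun j => j = 0 ∨ ν.colLen j < ν.colLen (j-1)),
      (q^β - q^j * t^(ν.colLen j - α))) ≠ 0 := by
    refine Finset.prod_ne_zero_iff.mpr fun j hj => ?_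
    rw [Finset.mem_filter, Finset.mem_range] at hj
    have he : j + (β - j) = β := by omega
    have h5 : q^β - q^j * t^(ν.colLen j - α) = q^j * (q^(β-j) - t^(ν.colLen j - α)) := by
      rw [mul_sub, ← pow_add, he]
    rw [h5]
    exact mul_ne_zero (pow_ne_zero _ q_ne_zero)
      (sub_ne _ _ (by have := hgt j hj.1; omega))
  rw [inv_mul_eq_div, div_div, div_eq_div_iff hLden
    (mul_ne_zero (pow_ne_zero _ q_ne_zero)
      (mul_ne_zero (pow_ne_zero _ (pow_ne_zero _ t_ne_zero)) hDF))]
  linear_combination ((t^α) ^ ((Finset.range β).filter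
    (fun j => ν.colLen (j+1) < ν.colLen j)).card) * keyeq

end
end

section
/- Let ν be a partition with ℓ removable corners, of weights R_1,…,R_ℓ, and ℓ+1 addable corners, of weights A_0,…,A_ℓ, and for each j set d_j = (1/A_j)·∏_{i=1}^{ℓ}(1 − qt·R_i/A_j) / ∏_{0≤i≤ℓ, i≠j}(1 − A_i/A_j) ∈ ℚ(q,t). Then: (a) Σ_{j=0}^{ℓ} d_j = 1; and (b) for every integer k ≥ 1, Σ_{j=0}^{ℓ} d_j·A_j^k equals the coefficient of y^{k−1} in the formal power series ∏_{i=1}^{ℓ}(1 − qt·R_i·y) / ∏_{j=0}^{ℓ}(1 − A_j·y) ∈ ℚ(q,t)[[y]]. (This is the summation formula Σ_{μ←ν} d_{μν}(T_μ/T_ν)^k = (−1)^{k−1}e_{k−1}[D_ν] for the e_1-Pieri coefficients of modified Macdonald polynomials.) -/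
open scoped Classical
open PowerSeries

noncomputable section

lemma w_ne_zero (c : ℕ × ℕ) : w c ≠ 0 :=
  mul_ne_zero (pow_ne_zero _ t_ne_zero) (pow_ne_zero _ q_ne_zero)

lemma w_injective : Function.Injective w := by
  rintro ⟨i, j⟩ ⟨i', j'⟩ h
  have halg := IsFractionRing.injective (MvPolynomial (Fin 2) ℚ) K
  have h2 : (MvPolynomial.X 1 ^ i * MvPolynomial.X 0 ^ j : MvPolynomial (Fin 2) ℚ)
      = MvPolynomial.X 1 ^ i' * MvPolynomial.X 0 ^ j' := by
    apply halg
    simpa [w, q, t, map_mul, map_pow] using h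
  rw [MvPolynomial.X_pow_eq_monomial, MvPolynomial.X_pow_eq_monomial,
    MvPolynomial.X_pow_eq_monomial, MvPolynomial.X_pow_eq_monomial,
    MvPolynomial.monomial_mul, MvPolynomial.monomial_mul] at h2
  have h3 : Finsupp.single (1 : Fin 2) i + Finsupp.single 0 j
      = Finsupp.single (1 : Fin 2) i' + Finsupp.single 0 j' := by
    rw [mul_one] at h2
    exact MvPolynomial.monomial_left_injective (R := ℚ) one_ne_zero h2
  have hi := DFunLike.congr_fun h3 (1 : Fin 2)
  have hj := DFunLike.congr_fun h3 (0 : Fin 2)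
  simp [Finsupp.single_apply, (by decide : (0 : Fin 2) ≠ 1)] at hi hj
  simp [hi, hj]

lemma isRemovable_iff {ν : YoungDiagram} {i j : ℕ} :
    IsRemovable ν (i, j) ↔ j + 1 = ν.rowLen i ∧ ν.rowLen (i + 1) ≤ j := by
  constructor
  · rintro ⟨hmem, hlow⟩
    have hj : j < ν.rowLen i := YoungDiagram.mem_iff_lt_rowLen.mp hmem
    constructor
    · by_contra hne
      have h1 : j + 1 < ν.rowLen i := lt_of_le_of_ne hj (fun h => hne h)
      have h2 : ((i, j + 1) : ℕ × ℕ) ∈ ν.cells.erase (i, j) := by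
        refine Finset.mem_erase.mpr ⟨by simp, ?_⟩
        rw [YoungDiagram.mem_cells]
        exact YoungDiagram.mem_iff_lt_rowLen.mpr h1
      have h3 : ((i, j) : ℕ × ℕ) ∈ ν.cells.erase (i, j) := by
        have := hlow (a := ((i, j + 1) : ℕ × ℕ)) (b := ((i, j) : ℕ × ℕ))
          (Prod.mk_le_mk.mpr ⟨le_refl i, Nat.le_succ j⟩) (by exact_mod_cast h2)
        exact_mod_cast this
      exact (Finset.notMem_erase _ _) h3
    · by_contra hne
      push_neg at hne
      have h2 : ((i + 1, j) : ℕ × ℕ) ∈ ν.cells.erase (i, j) := by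
        refine Finset.mem_erase.mpr ⟨by simp, ?_⟩
        rw [YoungDiagram.mem_cells]
        exact YoungDiagram.mem_iff_lt_rowLen.mpr hne
      have h3 : ((i, j) : ℕ × ℕ) ∈ ν.cells.erase (i, j) := by
        have := hlow (a := ((i + 1, j) : ℕ × ℕ)) (b := ((i, j) : ℕ × ℕ))
          (Prod.mk_le_mk.mpr ⟨Nat.le_succ i, le_refl j⟩) (by exact_mod_cast h2)
        exact_mod_cast this
      exact (Finset.notMem_erase _ _) h3
  · rintro ⟨h1, h2⟩
    constructor
    · exact YoungDiagram.mem_iff_lt_rowLen.mpr (by omega)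
    · intro a b hba ha
      simp only [Finset.coe_erase, Set.mem_diff, Finset.mem_coe, YoungDiagram.mem_cells,
        Set.mem_singleton_iff] at ha ⊢
      obtain ⟨haν, hane⟩ := ha
      refine ⟨ν.isLowerSet hba haν, ?_⟩
      rintro rfl
      obtain ⟨a1, a2⟩ := a
      obtain ⟨hb1, hb2⟩ := Prod.mk_le_mk.mp hba
      have haa : a2 < ν.rowLen a1 := YoungDiagram.mem_iff_lt_rowLen.mp haν
      have hr1 : ν.rowLen a1 ≤ ν.rowLen i := ν.rowLen_anti _ _ hb1
      have ha1i : a1 = i := by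
        by_contra hne
        have : i + 1 ≤ a1 := by omega
        have := ν.rowLen_anti _ _ this
        omega
      subst ha1i
      have : a2 = j := by omega
      simp [this] at hane

lemma isAddable_iff {ν : YoungDiagram} {i j : ℕ} :
    IsAddable ν (i, j) ↔ j = ν.rowLen i ∧ ∀ i' < i, ν.rowLen i < ν.rowLen i' := by
  constructor
  · rintro ⟨hmem, hlow⟩
    have hj : ν.rowLen i ≤ j := by
      by_contra h
      exact hmem (YoungDiagram.mem_iff_lt_rowLen.mpr (by omega))
    have hj2 : j ≤ ν.rowLen i := by
      by_contra h
      push_neg at h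
      have h2 : ((i, j - 1) : ℕ × ℕ) ∈ (insert ((i, j) : ℕ × ℕ) ν.cells : Finset (ℕ × ℕ)) := by
        have := hlow (a := ((i, j) : ℕ × ℕ)) (b := ((i, j - 1) : ℕ × ℕ))
          (Prod.mk_le_mk.mpr ⟨le_refl i, Nat.sub_le j 1⟩) (by simp)
        exact_mod_cast this
      rcases Finset.mem_insert.mp h2 with h3 | h3
      · have : j - 1 = j := congrArg Prod.snd h3
        omega
      · rw [YoungDiagram.mem_cells] at h3
        have := YoungDiagram.mem_iff_lt_rowLen.mp h3
        omega
    have hji : j = ν.rowLen i := le_antisymm hj2 hj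
    refine ⟨hji, fun i' hi' => ?_⟩
    have h2 : ((i', j) : ℕ × ℕ) ∈ (insert ((i, j) : ℕ × ℕ) ν.cells : Finset (ℕ × ℕ)) := by
      have := hlow (a := ((i, j) : ℕ × ℕ)) (b := ((i', j) : ℕ × ℕ))
        (Prod.mk_le_mk.mpr ⟨le_of_lt hi', le_refl j⟩) (by simp)
      exact_mod_cast this
    rcases Finset.mem_insert.mp h2 with h3 | h3
    · have : i' = i := congrArg Prod.fst h3
      omega
    · rw [YoungDiagram.mem_cells] at h3
      have := YoungDiagram.mem_iff_lt_rowLen.mp h3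
      omega
  · rintro ⟨h1, h2⟩
    constructor
    · intro h
      have := YoungDiagram.mem_iff_lt_rowLen.mp h
      omega
    · intro a b hba ha
      simp only [Finset.coe_insert, Set.mem_insert_iff, Finset.mem_coe,
        YoungDiagram.mem_cells] at ha ⊢
      rcases ha with rfl | haν
      · obtain ⟨b1, b2⟩ := b
        obtain ⟨hb1, hb2⟩ := Prod.mk_le_mk.mp hba
        by_cases hb : b2 < ν.rowLen b1
        · exact Or.inr (YoungDiagram.mem_iff_lt_rowLen.mpr hb)
        · push_neg at hb
          have hr1 : ν.rowLen i ≤ ν.rowLen b1 := ν.rowLen_anti _ _ hb1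
          have hb1i : b1 = i := by
            by_contra hne
            have := h2 b1 (by omega)
            omega
          subst hb1i
          have : b2 = j := by omega
          exact Or.inl (by simp [this])
      · exact Or.inr (ν.isLowerSet hba haν)

lemma rowLen_colLen_zero (ν : YoungDiagram) : ν.rowLen (ν.colLen 0) = 0 := by
  by_contra h
  have h1 : ((ν.colLen 0, 0) : ℕ × ℕ) ∈ ν := YoungDiagram.mem_iff_lt_rowLen.mpr (by omega)
  have := YoungDiagram.mem_iff_lt_colLen.mp h1
  omega

lemma rowLen_ge_colLen_eq_zero (ν : YoungDiagram) {i : ℕ} (h : ν.colLen 0 ≤ i) :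
    ν.rowLen i = 0 :=
  Nat.le_zero.mp ((rowLen_colLen_zero ν) ▸ ν.rowLen_anti _ _ h)

/-- the set of rows containing a removable corner -/
def Dset (ν : YoungDiagram) : Finset ℕ :=
  (Finset.range (ν.colLen 0)).filter (fun i => ν.rowLen (i + 1) < ν.rowLen i)

lemma mem_Dset {ν : YoungDiagram} {i : ℕ} : i ∈ Dset ν ↔ ν.rowLen (i + 1) < ν.rowLen i := by
  simp only [Dset, Finset.mem_filter, Finset.mem_range, and_iff_right_iff_imp]
  intro h
  by_contra h2
  push_neg at h2
  have := rowLen_ge_colLen_eq_zero ν h2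
  omega

lemma sum_key (ν : YoungDiagram) :
    ν.rowLen 0 + ∑ i ∈ Dset ν, ν.rowLen (i + 1) = ∑ i ∈ Dset ν, ν.rowLen i := by
  classical
  set N := ν.colLen 0 with hN
  set P : ℕ → Prop := fun i => ν.rowLen (i + 1) < ν.rowLen i with hP
  have hsplit1 : ∑ i ∈ (Finset.range N).filter P, ν.rowLen i
      + ∑ i ∈ (Finset.range N).filter (fun i => ¬ P i), ν.rowLen i
      = ∑ i ∈ Finset.range N, ν.rowLen i :=
    Finset.sum_filter_add_sum_filter_not _ _ _
  have hsplit2 : ∑ i ∈ (Finset.range N).filter P, ν.rowLen (i + 1)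
      + ∑ i ∈ (Finset.range N).filter (fun i => ¬ P i), ν.rowLen (i + 1)
      = ∑ i ∈ Finset.range N, ν.rowLen (i + 1) :=
    Finset.sum_filter_add_sum_filter_not _ _ _
  have heq : ∑ i ∈ (Finset.range N).filter (fun i => ¬ P i), ν.rowLen i
      = ∑ i ∈ (Finset.range N).filter (fun i => ¬ P i), ν.rowLen (i + 1) := by
    apply Finset.sum_congr rfl
    intro i hi
    have h1 : ¬ P i := (Finset.mem_filter.mp hi).2
    have h2 := ν.rowLen_anti i (i + 1) (Nat.le_succ i)
    simp only [hP] at h1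
    omega
  have htel1 : ∑ i ∈ Finset.range (N + 1), ν.rowLen i
      = (∑ i ∈ Finset.range N, ν.rowLen (i + 1)) + ν.rowLen 0 := Finset.sum_range_succ' _ _
  have htel2 : ∑ i ∈ Finset.range (N + 1), ν.rowLen i
      = (∑ i ∈ Finset.range N, ν.rowLen i) + ν.rowLen N := Finset.sum_range_succ _ _
  have hzero : ν.rowLen N = 0 := rowLen_colLen_zero ν
  have : Dset ν = (Finset.range N).filter P := rfl
  rw [this]
  omega

section Structure

variable {ν : YoungDiagram} {Rem Add : Finset (ℕ × ℕ)}

lemma Rem_eq (hRem : ∀ x, x ∈ Rem ↔ IsRemovable ν x) :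
    Rem = (Dset ν).image (fun i => (i, ν.rowLen i - 1)) := by
  ext x
  obtain ⟨i, j⟩ := x
  rw [hRem, isRemovable_iff, Finset.mem_image]
  constructor
  · rintro ⟨h1, h2⟩
    exact ⟨i, mem_Dset.mpr (by omega), by simp; omega⟩
  · rintro ⟨k, hk, hkx⟩
    have hk2 := mem_Dset.mp hk
    obtain ⟨rfl, rfl⟩ : k = i ∧ ν.rowLen k - 1 = j := by
      constructor <;> [exact congrArg Prod.fst hkx; exact congrArg Prod.snd hkx]
    omega

lemma Add_eq (hAdd : ∀ x, x ∈ Add ↔ IsAddable ν x) :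
    Add = insert (0, ν.rowLen 0) ((Dset ν).image (fun i => (i + 1, ν.rowLen (i + 1)))) := by
  ext x
  obtain ⟨i, j⟩ := x
  rw [hAdd, isAddable_iff, Finset.mem_insert, Finset.mem_image]
  constructor
  · rintro ⟨rfl, h2⟩
    rcases Nat.eq_zero_or_eq_succ_pred i with hi | hi
    · subst hi; exact Or.inl rfl
    · right
      refine ⟨i - 1, mem_Dset.mpr ?_, ?_⟩
      · have := h2 (i - 1) (by omega)
        rw [show i - 1 + 1 = i by omega]
        exact this
      · simp [show i - 1 + 1 = i by omega]
  · rintro (h | ⟨k, hk, hkx⟩)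
    · obtain ⟨rfl, rfl⟩ : i = 0 ∧ j = ν.rowLen 0 := by
        simp only [Prod.mk.injEq] at h
        exact h
      exact ⟨rfl, fun i' hi' => absurd hi' (Nat.not_lt_zero i')⟩
    · have hk2 := mem_Dset.mp hk
      obtain ⟨rfl, rfl⟩ : k + 1 = i ∧ ν.rowLen (k + 1) = j := by
        constructor <;> [exact congrArg Prod.fst hkx; exact congrArg Prod.snd hkx]
      exact ⟨rfl, fun i' hi' => lt_of_lt_of_le hk2 (ν.rowLen_anti _ _ (by omega))⟩

lemma card_eq (hRem : ∀ x, x ∈ Rem ↔ IsRemovable ν x)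
    (hAdd : ∀ x, x ∈ Add ↔ IsAddable ν x) : Add.card = Rem.card + 1 := by
  have h1 : ((0, ν.rowLen 0) : ℕ × ℕ)
      ∉ (Dset ν).image (fun i => (i + 1, ν.rowLen (i + 1))) := by
    simp only [Finset.mem_image, not_exists, not_and]
    intro k hk h
    have := congrArg Prod.fst h
    simp at this
  have h2 : Function.Injective (fun i => (i + 1, ν.rowLen (i + 1)) : ℕ → ℕ × ℕ) := by
    intro a b hab; simpa using congrArg Prod.fst hab
  have h3 : Function.Injective (fun i => (i, ν.rowLen i - 1) : ℕ → ℕ × ℕ) := by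
    intro a b hab; exact congrArg Prod.fst hab
  rw [Rem_eq hRem, Add_eq hAdd, Finset.card_insert_of_notMem h1,
    Finset.card_image_of_injective _ h2, Finset.card_image_of_injective _ h3]

lemma prod_eq (hRem : ∀ x, x ∈ Rem ↔ IsRemovable ν x)
    (hAdd : ∀ x, x ∈ Add ↔ IsAddable ν x) :
    ∏ a ∈ Add, w a = ∏ r ∈ Rem, (q * t * w r) := by
  have h1 : ((0, ν.rowLen 0) : ℕ × ℕ)
      ∉ (Dset ν).image (fun i => (i + 1, ν.rowLen (i + 1))) := by
    simp only [Finset.mem_image, not_exists, not_and]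
    intro k hk h
    have := congrArg Prod.fst h
    simp at this
  have h2 : Function.Injective (fun i => (i + 1, ν.rowLen (i + 1)) : ℕ → ℕ × ℕ) := by
    intro a b hab; simpa using congrArg Prod.fst hab
  have h3 : Function.Injective (fun i => (i, ν.rowLen i - 1) : ℕ → ℕ × ℕ) := by
    intro a b hab; exact congrArg Prod.fst hab
  rw [Rem_eq hRem, Add_eq hAdd, Finset.prod_insert h1,
    Finset.prod_image (fun a _ b _ hab => h2 hab), Finset.prod_image (fun a _ b _ hab => h3 hab)]
  have hL : ∀ i ∈ Dset ν, w (i + 1, ν.rowLen (i + 1)) = t ^ (i + 1) * q ^ ν.rowLen (i + 1) := by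
    intro i _; simp [w]
  have hR : ∀ i ∈ Dset ν, q * t * w (i, ν.rowLen i - 1) = t ^ (i + 1) * q ^ ν.rowLen i := by
    intro i hi
    have hpos : 1 ≤ ν.rowLen i := by
      have := mem_Dset.mp hi; omega
    conv_rhs => rw [show ν.rowLen i = (ν.rowLen i - 1) + 1 by omega]
    simp only [w]
    ring
  rw [Finset.prod_congr rfl hL, Finset.prod_congr rfl hR]
  rw [Finset.prod_mul_distrib, Finset.prod_mul_distrib]
  simp only [Finset.prod_pow_eq_pow_sum]
  have hw0 : w (0, ν.rowLen 0) = q ^ ν.rowLen 0 := by simp [w]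
  rw [hw0, mul_left_comm, ← pow_add, sum_key ν]

end Structure

lemma coeff_one_lin (b : K) : (1 - Polynomial.C b * Polynomial.X).coeff 1 = -b := by
  simp [Polynomial.coeff_one]

lemma natDegree_lin_le (b : K) : (1 - Polynomial.C b * Polynomial.X).natDegree ≤ 1 := by
  apply Polynomial.natDegree_le_iff_degree_le.mpr
  refine le_trans (Polynomial.degree_sub_le _ _) (max_le ?_ ?_)
  · exact le_trans Polynomial.degree_one_le (by norm_num)
  · exact Polynomial.degree_C_mul_X_le b

lemma geo_series (b : K) : ((1 : K⟦X⟧) - C (R := K) b * X) * (mk fun n => b ^ n) = 1 := by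
  ext n
  rw [sub_mul, one_mul, map_sub]
  cases n with
  | zero =>
    have h1 : (C (R := K) b * X * mk fun n => b ^ n) = C (R := K) b * ((mk fun n => b ^ n) * X) := by ring
    rw [h1, coeff_C_mul, coeff_zero_mul_X]
    simp
  | succ n =>
    have h1 : (C (R := K) b * X * mk fun n => b ^ n) = C (R := K) b * ((mk fun n => b ^ n) * X) := by ring
    rw [h1, coeff_C_mul, coeff_succ_mul_X, coeff_mk, coeff_mk]
    simp [coeff_one, pow_succ]
    ring

lemma prod_neg_aux (s : Finset (ℕ × ℕ)) (f : (ℕ × ℕ) → K) :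
    ∏ x ∈ s, (-(f x)) = (-1) ^ s.card * ∏ x ∈ s, f x := by
  rw [← Finset.prod_const, ← Finset.prod_mul_distrib]
  simp

/-- the summation formulas for the corner-weight `e₁`-Pieri coefficients
`d_{μν}`: they sum to `1`, and with weight `A_j^k` they give the coefficient of
`y^{k-1}` in `∏(1 − qt·R·y)/∏(1 − A·y)`. -/
theorem stmt_5 (ν : YoungDiagram) (Rem Add : Finset (ℕ × ℕ))
    (hRem : ∀ x, x ∈ Rem ↔ IsRemovable ν x)
    (hAdd : ∀ x, x ∈ Add ↔ IsAddable ν x)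
    (d : (ℕ × ℕ) → K)
    (hd : ∀ a ∈ Add, d a =
      (w a)⁻¹ * (∏ r ∈ Rem, (1 - q * t * w r / w a)) /
        ∏ a' ∈ Add.erase a, (1 - w a' / w a)) :
    (∑ a ∈ Add, d a) = 1 ∧
    ∀ k : ℕ, 1 ≤ k →
      (∑ a ∈ Add, d a * w a ^ k) =
        coeff (R := K) (k - 1)
          ((∏ r ∈ Rem, (1 - C (R := K) (q * t * w r) * X)) *
            (∏ a ∈ Add, (1 - C (R := K) (w a) * X))⁻¹) := by
  classical
  have hcard : Add.card = Rem.card + 1 := card_eq hRem hAdd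
  have hprodAB : ∏ a ∈ Add, w a = ∏ r ∈ Rem, (q * t * w r) := prod_eq hRem hAdd
  have hQ0 : ∀ a ∈ Add, (∏ a' ∈ Add.erase a, (1 - w a' / w a)) ≠ 0 := by
    intro a _
    apply Finset.prod_ne_zero_iff.mpr
    intro a' ha'
    have hne : w a' ≠ w a := fun h => (Finset.ne_of_mem_erase ha') (w_injective h)
    intro hzero
    exact hne ((div_eq_one_iff_eq (w_ne_zero a)).mp (sub_eq_zero.mp hzero).symm)
  set c : (ℕ × ℕ) → K := fun a =>
    (∏ r ∈ Rem, (1 - q * t * w r / w a)) / ∏ a' ∈ Add.erase a, (1 - w a' / w a) with hc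
  have hdc : ∀ a ∈ Add, d a = c a / w a := by
    intro a ha
    rw [hd a ha, hc]
    ring
  have hinj : Set.InjOn (fun a => (w a)⁻¹) Add := by
    intro x _ y _ h
    apply w_injective
    have := congrArg (fun z : K => z⁻¹) h
    simpa using this
  -- the key polynomial identity
  have PI : (∏ r ∈ Rem, (1 - Polynomial.C (q * t * w r) * Polynomial.X))
      = ∑ a ∈ Add, Polynomial.C (c a)
          * ∏ a' ∈ Add.erase a, (1 - Polynomial.C (w a') * Polynomial.X) := by
    apply Polynomial.eq_of_degrees_lt_of_eval_index_eq (v := fun a => (w a)⁻¹) Add hinj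
    · -- degree LHS < #Add
      have hnat : (∏ r ∈ Rem, (1 - Polynomial.C (q * t * w r) * Polynomial.X)).natDegree
          ≤ Rem.card :=
        le_trans (Polynomial.natDegree_prod_le Rem
          (fun r => 1 - Polynomial.C (q * t * w r) * Polynomial.X))
          (le_trans (Finset.sum_le_sum (fun r _ => natDegree_lin_le (q * t * w r))) (by simp))
      calc (∏ r ∈ Rem, (1 - Polynomial.C (q * t * w r) * Polynomial.X)).degree
          ≤ ((∏ r ∈ Rem, (1 - Polynomial.C (q * t * w r) * Polynomial.X)).natDegree : WithBot ℕ) :=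
            Polynomial.degree_le_natDegree
        _ ≤ (Rem.card : WithBot ℕ) := by exact_mod_cast hnat
        _ < (Add.card : WithBot ℕ) := by exact_mod_cast (by omega : Rem.card < Add.card)
    · -- degree RHS < #Add
      refine lt_of_le_of_lt (Polynomial.degree_sum_le _ _) ?_
      apply Finset.sup_lt_iff (by
        exact_mod_cast (WithBot.bot_lt_coe Add.card)) |>.mpr
      intro a ha
      have h1 : (Add.erase a).card = Rem.card := by
        rw [Finset.card_erase_of_mem ha]; omega
      have hnat : (Polynomial.C (c a)
          * ∏ a' ∈ Add.erase a, (1 - Polynomial.C (w a') * Polynomial.X)).natDegree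
          ≤ Rem.card := by
        refine le_trans (Polynomial.natDegree_mul_le) ?_
        rw [Polynomial.natDegree_C, zero_add]
        refine le_trans (Polynomial.natDegree_prod_le _ _) ?_
        refine le_trans (Finset.sum_le_sum (fun r _ => natDegree_lin_le (w r))) ?_
        simp [h1]
      calc (Polynomial.C (c a)
          * ∏ a' ∈ Add.erase a, (1 - Polynomial.C (w a') * Polynomial.X)).degree
          ≤ ((Polynomial.C (c a)
          * ∏ a' ∈ Add.erase a, (1 - Polynomial.C (w a') * Polynomial.X)).natDegree : WithBot ℕ) :=
            Polynomial.degree_le_natDegree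
        _ ≤ (Rem.card : WithBot ℕ) := by exact_mod_cast hnat
        _ < (Add.card : WithBot ℕ) := by exact_mod_cast (by omega : Rem.card < Add.card)
    · -- evaluations agree
      intro b hb
      rw [Polynomial.eval_prod, Polynomial.eval_finset_sum,
        Finset.sum_eq_single_of_mem b hb ?_]
      · simp only [Polynomial.eval_mul, Polynomial.eval_C, Polynomial.eval_prod,
          Polynomial.eval_sub, Polynomial.eval_one, Polynomial.eval_X]
        rw [hc]
        simp only [div_eq_mul_inv]
        rw [mul_assoc, inv_mul_cancel₀ (by
          simpa only [div_eq_mul_inv] using hQ0 b hb), mul_one]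
      · intro a ha hab
        rw [Polynomial.eval_mul, Polynomial.eval_prod]
        apply mul_eq_zero_of_right
        apply Finset.prod_eq_zero (Finset.mem_erase.mpr ⟨hab.symm, hb⟩)
        simp [mul_inv_cancel₀ (w_ne_zero b)]
  -- coefficient extraction at degree Rem.card
  have hcoeffL : (∏ r ∈ Rem, (1 - Polynomial.C (q * t * w r) * Polynomial.X)).coeff Rem.card
      = (-1) ^ Rem.card * ∏ r ∈ Rem, (q * t * w r) := by
    have := Polynomial.coeff_prod_of_natDegree_le (s := Rem)
      (f := fun r => 1 - Polynomial.C (q * t * w r) * Polynomial.X) 1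
      (fun p _ => natDegree_lin_le _)
    rw [mul_one] at this
    rw [this, Finset.prod_congr rfl (fun r _ => coeff_one_lin (q * t * w r)), prod_neg_aux]
  have hcoeffR : ∀ a ∈ Add,
      (∏ a' ∈ Add.erase a, (1 - Polynomial.C (w a') * Polynomial.X)).coeff Rem.card
      = (-1) ^ Rem.card * ∏ a' ∈ Add.erase a, w a' := by
    intro a ha
    have h1 : (Add.erase a).card = Rem.card := by
      rw [Finset.card_erase_of_mem ha]; omega
    have := Polynomial.coeff_prod_of_natDegree_le (s := Add.erase a)
      (f := fun a' => 1 - Polynomial.C (w a') * Polynomial.X) 1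
      (fun p _ => natDegree_lin_le _)
    rw [mul_one, h1] at this
    rw [this, Finset.prod_congr rfl (fun r _ => coeff_one_lin (w r)), prod_neg_aux, h1]
  -- main identity from coefficient comparison
  have hmain : ∏ r ∈ Rem, (q * t * w r) = ∑ a ∈ Add, c a * ∏ a' ∈ Add.erase a, w a' := by
    have h1 := congrArg (fun p => Polynomial.coeff p Rem.card) PI
    simp only [Polynomial.finset_sum_coeff, Polynomial.coeff_C_mul] at h1
    rw [hcoeffL, Finset.sum_congr rfl (fun a ha => by rw [hcoeffR a ha])] at h1
    have h2 : (-1 : K) ^ Rem.card ≠ 0 := pow_ne_zero _ (by norm_num)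
    apply mul_left_cancel₀ h2
    rw [h1, Finset.mul_sum]
    apply Finset.sum_congr rfl
    intro a _
    ring
  have hPA : (∏ a ∈ Add, w a) ≠ 0 := Finset.prod_ne_zero_iff.mpr (fun a _ => w_ne_zero a)
  constructor
  · -- part (a)
    apply mul_right_cancel₀ hPA
    rw [one_mul, Finset.sum_mul]
    calc ∑ a ∈ Add, d a * ∏ a' ∈ Add, w a'
        = ∑ a ∈ Add, c a * ∏ a' ∈ Add.erase a, w a' := by
          apply Finset.sum_congr rfl
          intro a ha
          rw [hdc a ha, ← Finset.mul_prod_erase Add _ ha, ← mul_assoc,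
            div_mul_cancel₀ _ (w_ne_zero a)]
      _ = ∏ r ∈ Rem, (q * t * w r) := hmain.symm
      _ = ∏ a ∈ Add, w a := hprodAB.symm
  · -- part (b)
    intro k hk
    have hDconst : constantCoeff (R := K) (∏ a ∈ Add, ((1 : K⟦X⟧) - C (R := K) (w a) * X)) ≠ 0 := by
      rw [map_prod]
      simp
    have PS : (∏ r ∈ Rem, ((1 : K⟦X⟧) - C (R := K) (q * t * w r) * X))
        = ∑ a ∈ Add, C (R := K) (c a) * ∏ a' ∈ Add.erase a, (1 - C (R := K) (w a') * X) := by
      have h := congrArg (Polynomial.coeToPowerSeries.ringHom (R := K)) PI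
      simpa only [map_prod, map_sum, map_sub, map_mul, map_one,
        Polynomial.coeToPowerSeries.ringHom_apply, Polynomial.coe_C, Polynomial.coe_X] using h
    have hSD : (∑ a ∈ Add, C (R := K) (c a) * mk fun n => (w a) ^ n)
        * (∏ a ∈ Add, ((1 : K⟦X⟧) - C (R := K) (w a) * X))
        = ∏ r ∈ Rem, ((1 : K⟦X⟧) - C (R := K) (q * t * w r) * X) := by
      rw [Finset.sum_mul, PS]
      apply Finset.sum_congr rfl
      intro a ha
      rw [← Finset.mul_prod_erase Add _ ha]
      rw [show (C (R := K) (c a) * mk fun n => (w a) ^ n)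
          * ((1 - C (R := K) (w a) * X) * ∏ a' ∈ Add.erase a, (1 - C (R := K) (w a') * X))
          = C (R := K) (c a) * (((1 - C (R := K) (w a) * X) * mk fun n => (w a) ^ n)
            * ∏ a' ∈ Add.erase a, (1 - C (R := K) (w a') * X)) from by ring,
        geo_series (w a), one_mul]
    have hfinal : (∏ r ∈ Rem, ((1 : K⟦X⟧) - C (R := K) (q * t * w r) * X))
        * (∏ a ∈ Add, ((1 : K⟦X⟧) - C (R := K) (w a) * X))⁻¹
        = ∑ a ∈ Add, C (R := K) (c a) * mk fun n => (w a) ^ n := by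
      rw [← hSD, mul_assoc, PowerSeries.mul_inv_cancel _ hDconst, mul_one]
    rw [hfinal, map_sum]
    simp only [coeff_C_mul, coeff_mk]
    apply Finset.sum_congr rfl
    intro a ha
    rw [hdc a ha]
    have hpow : w a ^ k = w a * w a ^ (k - 1) := by
      conv_lhs => rw [show k = (k - 1) + 1 by omega]
      rw [pow_succ']
    rw [hpow, ← mul_assoc, div_mul_cancel₀ _ (w_ne_zero a)]

end
end
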